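/- arXiv:1907.00368 — 2 statements merged into one kernel-verified Lean document; each statement's English description precedes it below -/
import Mathlib

section
/- The function d ↦ (sin d − d·cos d)²/(1 − cos d)³ is (strictly) monotone increasing on the open interval (0, π). -/
open Real

lemma aux_hA (d : ℝ) (hd : d ∈ Set.Ioo 0 π) : 0 < Real.sin d - d * Real.cos d := by
  have hmono : StrictMonoOn (fun x : ℝ => Real.sin x - x * Real.cos x) (Set.Icc 0 π) := by
    apply strictMonoOn_of_deriv_pos (convex_Icc 0 π)
    · fun_prop
    · intro x hx
      rw [interior_Icc] at hx
      have h : HasDerivAt (fun x : ℝ => Real.sin x - x * Real.cos x) (x * Real.sin x) x := by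
        have := (Real.hasDerivAt_sin x).sub ((hasDerivAt_id' x).mul (Real.hasDerivAt_cos x))
        convert this using 1 <;> first | rfl | ring | (simp only [id_eq]; ring) | (norm_num; ring)
      rw [h.deriv]
      exact mul_pos hx.1 (Real.sin_pos_of_pos_of_lt_pi hx.1 hx.2)
  have := hmono (Set.left_mem_Icc.2 Real.pi_pos.le)
    ⟨hd.1.le, hd.2.le⟩ hd.1
  simpa using this

lemma aux_hB1 (d : ℝ) (hd : d ∈ Set.Ioo 0 π) : 0 < 2 - 2 * Real.cos d - d * Real.sin d := by
  have hmono : StrictMonoOn (fun x : ℝ => 2 - 2 * Real.cos x - x * Real.sin x) (Set.Icc 0 π) := by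
    apply strictMonoOn_of_deriv_pos (convex_Icc 0 π)
    · fun_prop
    · intro x hx
      rw [interior_Icc] at hx
      have h : HasDerivAt (fun x : ℝ => 2 - 2 * Real.cos x - x * Real.sin x)
          (Real.sin x - x * Real.cos x) x := by
        have := ((hasDerivAt_const x (2:ℝ)).sub
            ((hasDerivAt_const x (2:ℝ)).mul (Real.hasDerivAt_cos x))).sub
            ((hasDerivAt_id' x).mul (Real.hasDerivAt_sin x))
        convert this using 1 <;> first | rfl | ring | (simp only [id_eq]; ring) | (norm_num; ring)
      rw [h.deriv]
      exact aux_hA x hx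
  have := hmono (Set.left_mem_Icc.2 Real.pi_pos.le) ⟨hd.1.le, hd.2.le⟩ hd.1
  simpa using this

lemma aux_hB (d : ℝ) (hd : d ∈ Set.Ioo 0 π) : 0 < 2 * d + d * Real.cos d - 3 * Real.sin d := by
  have hmono : StrictMonoOn (fun x : ℝ => 2 * x + x * Real.cos x - 3 * Real.sin x) (Set.Icc 0 π) := by
    apply strictMonoOn_of_deriv_pos (convex_Icc 0 π)
    · fun_prop
    · intro x hx
      rw [interior_Icc] at hx
      have h : HasDerivAt (fun x : ℝ => 2 * x + x * Real.cos x - 3 * Real.sin x)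
          (2 - 2 * Real.cos x - x * Real.sin x) x := by
        have := (((hasDerivAt_const x (2:ℝ)).mul (hasDerivAt_id' x)).add
            ((hasDerivAt_id' x).mul (Real.hasDerivAt_cos x))).sub
            ((hasDerivAt_const x (3:ℝ)).mul (Real.hasDerivAt_sin x))
        convert this using 1 <;> first | rfl | ring | (simp only [id_eq]; ring) | (norm_num; ring)
      rw [h.deriv]
      exact aux_hB1 x hx
  have := hmono (Set.left_mem_Icc.2 Real.pi_pos.le) ⟨hd.1.le, hd.2.le⟩ hd.1
  simpa using this

theorem stmt_4 :
    StrictMonoOn (fun d : ℝ => (Real.sin d - d * Real.cos d) ^ 2 / (1 - Real.cos d) ^ 3)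
      (Set.Ioo 0 π) := by
  apply strictMonoOn_of_deriv_pos (convex_Ioo 0 π)
  · apply ContinuousOn.div
    · fun_prop
    · fun_prop
    · intro x hx
      have hc : Real.cos x < 1 := by
        have := Real.cos_lt_cos_of_nonneg_of_le_pi le_rfl hx.2.le hx.1
        simpa using this
      have : (0:ℝ) < 1 - Real.cos x := by linarith
      positivity
  · intro x hx
    rw [interior_Ioo] at hx
    have hc : Real.cos x < 1 := by
      have := Real.cos_lt_cos_of_nonneg_of_le_pi le_rfl hx.2.le hx.1
      simpa using this
    have hden : (0:ℝ) < 1 - Real.cos x := by linarith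
    set N := Real.sin x - x * Real.cos x with hN
    have hNd : HasDerivAt (fun d : ℝ => (Real.sin d - d * Real.cos d) ^ 2)
        (2 * N * (x * Real.sin x)) x := by
      have h1 : HasDerivAt (fun d : ℝ => Real.sin d - d * Real.cos d) (x * Real.sin x) x := by
        have := (Real.hasDerivAt_sin x).sub ((hasDerivAt_id' x).mul (Real.hasDerivAt_cos x))
        convert this using 1 <;> first | rfl | ring | (simp only [id_eq]; ring) | (norm_num; ring)
      have := h1.pow 2
      convert this using 1 <;> first | rfl | (rw [hN]; ring) | (rw [hN]; norm_num)
    have hDd : HasDerivAt (fun d : ℝ => (1 - Real.cos d) ^ 3)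
        (3 * (1 - Real.cos x) ^ 2 * Real.sin x) x := by
      have h1 : HasDerivAt (fun d : ℝ => 1 - Real.cos d) (Real.sin x) x := by
        have := (hasDerivAt_const x (1:ℝ)).sub (Real.hasDerivAt_cos x)
        convert this using 1 <;> first | rfl | ring | (simp only [id_eq]; ring) | (norm_num; ring)
      have := h1.pow 3
      convert this using 1 <;> first | rfl | ring | (simp only [id_eq]; ring) | (norm_num; ring)
    have hf := hNd.div hDd (by positivity)
    erw [hf.deriv]
    apply div_pos
    · have hsin := Real.sin_pos_of_pos_of_lt_pi hx.1 hx.2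
      have hNpos := aux_hA x hx
      have hg := aux_hB x hx
      have heq : 2 * N * (x * Real.sin x) * (1 - Real.cos x) ^ 3 -
          N ^ 2 * (3 * (1 - Real.cos x) ^ 2 * Real.sin x) =
          Real.sin x * (1 - Real.cos x) ^ 2 * N *
            (2 * x + x * Real.cos x - 3 * Real.sin x) := by
        rw [hN]; ring
      rw [heq]
      exact mul_pos (mul_pos (mul_pos hsin (by positivity)) hNpos) hg
    · positivity
end

section
/- For all d in (0, π), (1/π²)·(sin d − d·cos d)²/(1 − cos d)³ ≥ 8/(9π²). -/
open Real

private lemma key_deriv (x : ℝ) :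
    HasDerivAt (fun x => Real.sin x - x * Real.cos x - (8/3) * (Real.sin (x/2))^3)
      (x * Real.sin x - 4 * (Real.sin (x/2))^2 * Real.cos (x/2)) x := by
  have h1 : HasDerivAt Real.sin (Real.cos x) x := Real.hasDerivAt_sin x
  have h2 : HasDerivAt (fun x : ℝ => x * Real.cos x) (1 * Real.cos x + x * (-Real.sin x)) x :=
    (hasDerivAt_id x).mul (Real.hasDerivAt_cos x)
  have h3 : HasDerivAt (fun x : ℝ => Real.sin (x/2)) (Real.cos (x/2) * (1/2)) x := by
    have := (Real.hasDerivAt_sin (x/2)).comp x ((hasDerivAt_id x).div_const 2)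
    exact this
  have h5 := (h1.sub h2).sub ((h3.pow 3).const_mul (8/3 : ℝ))
  convert h5 using 1
  · rfl
  · rfl
  · rfl
  norm_num
  ring

private lemma key_ineq (d : ℝ) (hd : d ∈ Set.Icc 0 π) :
    (8/3) * (Real.sin (d/2))^3 ≤ Real.sin d - d * Real.cos d := by
  set f := fun x => Real.sin x - x * Real.cos x - (8/3) * (Real.sin (x/2))^3 with hf
  have hmono : MonotoneOn f (Set.Icc 0 π) := by
    apply monotoneOn_of_deriv_nonneg (convex_Icc 0 π)
    · apply Continuous.continuousOn
      fun_prop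
    · intro x hx
      exact (key_deriv x).differentiableAt.differentiableWithinAt
    · intro x hx
      rw [interior_Icc] at hx
      rw [(key_deriv x).deriv]
      have hs : 0 < Real.sin (x/2) := Real.sin_pos_of_pos_of_lt_pi (by linarith [hx.1])
        (by linarith [hx.2, Real.pi_pos])
      have hc : 0 < Real.cos (x/2) := Real.cos_pos_of_mem_Ioo
        ⟨by linarith [hx.1, Real.pi_pos], by linarith [hx.2]⟩
      have hsl : Real.sin (x/2) < x/2 := Real.sin_lt (by linarith [hx.1])
      have hsin : Real.sin x = 2 * Real.sin (x/2) * Real.cos (x/2) := by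
        rw [show x = 2 * (x/2) by ring, Real.sin_two_mul]
        ring_nf
      rw [hsin]
      nlinarith [mul_pos (mul_pos hs hc) (show 0 < x - 2 * Real.sin (x/2) by linarith)]
  have h0 : f 0 = 0 := by simp [hf]
  have := hmono (Set.left_mem_Icc.mpr Real.pi_pos.le) hd hd.1
  rw [h0] at this
  simp only [hf] at this
  linarith

theorem stmt_5 (d : ℝ) (hd : d ∈ Set.Ioo 0 π) :
    (1 / π ^ 2) * (Real.sin d - d * Real.cos d) ^ 2 / (1 - Real.cos d) ^ 3
      ≥ 8 / (9 * π ^ 2) := by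
  obtain ⟨hd0, hdpi⟩ := hd
  have hs : 0 < Real.sin (d/2) := Real.sin_pos_of_pos_of_lt_pi (by linarith)
    (by linarith [Real.pi_pos])
  have hhalf : 1 - Real.cos d = 2 * (Real.sin (d/2))^2 := by
    have h := Real.cos_two_mul (d/2)
    rw [show 2*(d/2) = d by ring] at h
    nlinarith [Real.sin_sq_add_cos_sq (d/2)]
  have hBpos : 0 < (1 - Real.cos d)^3 := by
    rw [hhalf]; positivity
  have hA : (8/3) * (Real.sin (d/2))^3 ≤ Real.sin d - d * Real.cos d :=
    key_ineq d ⟨hd0.le, hdpi.le⟩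
  have key : 8 * (1 - Real.cos d)^3 ≤ 9 * (Real.sin d - d * Real.cos d)^2 := by
    rw [hhalf]
    nlinarith [pow_pos hs 3, pow_pos hs 6, sq_nonneg (Real.sin d - d * Real.cos d - (8/3) * (Real.sin (d/2))^3)]
  have hpi : 0 < π := Real.pi_pos
  rw [ge_iff_le, div_le_div_iff₀ (by positivity) hBpos]
  have : 1 / π ^ 2 * (Real.sin d - d * Real.cos d) ^ 2 * (9 * π ^ 2)
      = 9 * (Real.sin d - d * Real.cos d)^2 := by
    field_simp
  rw [this]
  linarith
end
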